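/- Let p ≥ 0 be an integer, h > 0, and x_i ∈ ℝ. Suppose u^R : ℝ → ℝ coincides with a polynomial of degree at most p on (x_i − h/2, x_i) and with a polynomial of degree at most p on (x_i, x_i + h/2). Let J^k = (d^k/dx^k)u^R(x_i⁺) − (d^k/dx^k)u^R(x_i⁻) and D^k = J^k / h^{p+1−k} for 0 ≤ k ≤ p. Then for every polynomial v of degree at most p, the supremum of |v(x) − u^R(x)| over x ∈ (x_i − h/2, x_i + h/2) is at least h^{p+1} √(Q(D^0, …, D^p)). -/

import Mathlib

open MeasureTheory Polynomial

/-- `fd p d ξ = (1/2) Σ_{k=0}^p (d_k/k!) ξ^k`. -/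
noncomputable def fd (p : ℕ) (d : Fin (p+1) → ℝ) (ξ : ℝ) : ℝ :=
  (1/2) * ∑ k : Fin (p+1), d k / (Nat.factorial k) * ξ ^ (k : ℕ)

/-- The error functional whose infimum over polynomials of degree ≤ p defines `Qform`. -/
noncomputable def Qerr (p : ℕ) (d : Fin (p+1) → ℝ) (v : Polynomial ℝ) : ℝ :=
  (∫ ξ in (-(1:ℝ)/2)..0, (v.eval ξ + fd p d ξ)^2) +
  (∫ ξ in (0:ℝ)..(1/2), (v.eval ξ - fd p d ξ)^2)

/-- `Q(d) = inf_{v ∈ P} Qerr p d v`. -/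
noncomputable def Qform (p : ℕ) (d : Fin (p+1) → ℝ) : ℝ :=
  sInf {q : ℝ | ∃ v : Polynomial ℝ, v.natDegree ≤ p ∧ q = Qerr p d v}

/-- on one cell, for every polynomial `v` of degree ≤ p, the sup of
`|v - u^R|` over `(x_i - h/2, x_i + h/2)` is at least `h^{p+1} √(Q(D⁰,…,Dᵖ))`. -/
lemma taylor_sum_eval (p : ℕ) (q : Polynomial ℝ) (hq : q.natDegree ≤ p) (xi t : ℝ) :
    q.eval (xi + t) = ∑ k : Fin (p+1),
      (Polynomial.derivative^[(k:ℕ)] q).eval xi / (Nat.factorial k) * t ^ (k:ℕ) := by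
  have h1 : (Polynomial.taylor xi q).eval t = q.eval (t + xi) := Polynomial.taylor_eval xi q t
  rw [add_comm xi t, ← h1,
    Polynomial.eval_eq_sum_range' (n := p+1) (by rw [Polynomial.natDegree_taylor]; omega),
    ← Fin.sum_univ_eq_sum_range]
  refine Finset.sum_congr rfl fun k _ => ?_
  congr 1
  rw [Polynomial.taylor_coeff]
  have h2 : Polynomial.derivative^[(k:ℕ)] q = (Nat.factorial k) • Polynomial.hasseDeriv (k:ℕ) q := by
    rw [← Polynomial.factorial_smul_hasseDeriv]; rfl
  rw [h2]
  rw [Polynomial.eval_smul]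
  have h3 : ((Nat.factorial (k:ℕ)) : ℝ) ≠ 0 := by positivity
  field_simp
  rw [nsmul_eq_mul]; ring


set_option maxHeartbeats 2000000 in
theorem cell_sup_ge_scaled_sqrt_Qform (p : ℕ) (h xi : ℝ) (hh : 0 < h)
    (uR : ℝ → ℝ) (ql qr : Polynomial ℝ)
    (hql : ql.natDegree ≤ p) (hqr : qr.natDegree ≤ p)
    (hL : ∀ x ∈ Set.Ioo (xi - h/2) xi, uR x = ql.eval x)
    (hR : ∀ x ∈ Set.Ioo xi (xi + h/2), uR x = qr.eval x)
    (v : Polynomial ℝ) (hv : v.natDegree ≤ p) :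
    sSup ((fun x => |v.eval x - uR x|) '' Set.Ioo (xi - h/2) (xi + h/2)) ≥
      h^(p+1) * Real.sqrt (Qform p (fun k =>
        ((Polynomial.derivative^[(k:ℕ)] qr).eval xi -
         (Polynomial.derivative^[(k:ℕ)] ql).eval xi) / h^(p+1-(k:ℕ)))) := by
  have hne : h ≠ 0 := ne_of_gt hh
  have hhp : (0:ℝ) < h^(p+1) := by positivity
  set D : Fin (p+1) → ℝ := fun k =>
    ((Polynomial.derivative^[(k:ℕ)] qr).eval xi -
     (Polynomial.derivative^[(k:ℕ)] ql).eval xi) / h^(p+1-(k:ℕ)) with hD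
  set f : ℝ → ℝ := fun x => |v.eval x - uR x| with hf
  set I : Set ℝ := Set.Ioo (xi - h/2) (xi + h/2) with hI
  set S : ℝ := sSup (f '' I) with hSdef
  have hxiI : xi ∈ I := ⟨by linarith, by linarith⟩
  -- boundedness
  have hc1 : Continuous fun x => |v.eval x - ql.eval x| := (v.continuous.sub ql.continuous).abs
  have hc2 : Continuous fun x => |v.eval x - qr.eval x| := (v.continuous.sub qr.continuous).abs
  obtain ⟨M1, hM1⟩ := (isCompact_Icc (a := xi - h/2) (b := xi + h/2)).bddAbove_image
    hc1.continuousOn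
  obtain ⟨M2, hM2⟩ := (isCompact_Icc (a := xi - h/2) (b := xi + h/2)).bddAbove_image
    hc2.continuousOn
  have hbdd : BddAbove (f '' I) := by
    refine ⟨max (max M1 M2) (f xi), ?_⟩
    rintro y ⟨x, hx, rfl⟩
    rcases lt_trichotomy x xi with hlt | heq | hgt
    · have : f x = |v.eval x - ql.eval x| := by rw [hf]; simp [hL x ⟨hx.1, hlt⟩]
      rw [this]
      exact le_trans (hM1 ⟨x, ⟨le_of_lt hx.1, by linarith [hx.2]⟩, rfl⟩)
        (le_trans (le_max_left _ _) (le_max_left _ _))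
    · rw [heq]; exact le_max_right _ _
    · have : f x = |v.eval x - qr.eval x| := by rw [hf]; simp [hR x ⟨hgt, hx.2⟩]
      rw [this]
      exact le_trans (hM2 ⟨x, ⟨by linarith [hx.1], le_of_lt hx.2⟩, rfl⟩)
        (le_trans (le_max_right _ _) (le_max_left _ _))
  have hSle : ∀ x ∈ I, f x ≤ S := fun x hx => le_csSup hbdd ⟨x, hx, rfl⟩
  have hS0 : 0 ≤ S := le_trans (abs_nonneg _) (hSle xi hxiI)
  -- bounds on closed half-cells
  have hLicc : ∀ x ∈ Set.Icc (xi - h/2) xi, |v.eval x - ql.eval x| ≤ S := by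
    have hsub : Set.Icc (xi - h/2) xi ⊆ closure (Set.Ioo (xi - h/2) xi) := by
      rw [closure_Ioo (by linarith : xi - h/2 ≠ xi)]
    intro x hx
    refine le_on_closure (f := fun x => |v.eval x - ql.eval x|) (g := fun _ => S)
      (fun y hy => ?_) hc1.continuousOn continuousOn_const (hsub hx)
    show |v.eval y - ql.eval y| ≤ S
    have : |v.eval y - ql.eval y| = f y := by rw [hf]; simp [hL y hy]
    rw [this]
    exact hSle y ⟨hy.1, lt_trans hy.2 (by linarith)⟩
  have hRicc : ∀ x ∈ Set.Icc xi (xi + h/2), |v.eval x - qr.eval x| ≤ S := by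
    have hsub : Set.Icc xi (xi + h/2) ⊆ closure (Set.Ioo xi (xi + h/2)) := by
      rw [closure_Ioo (by linarith : xi ≠ xi + h/2)]
    intro x hx
    refine le_on_closure (f := fun x => |v.eval x - qr.eval x|) (g := fun _ => S)
      (fun y hy => ?_) hc2.continuousOn continuousOn_const (hsub hx)
    show |v.eval y - qr.eval y| ≤ S
    have : |v.eval y - qr.eval y| = f y := by rw [hf]; simp [hR y hy]
    rw [this]
    exact hSle y ⟨lt_of_lt_of_le (by linarith) (le_of_lt hy.1), hy.2⟩
  -- the competitor polynomial
  set w : Polynomial ℝ := Polynomial.C (1/h^(p+1)) *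
    ((v - Polynomial.C (1/2) * (ql + qr)).comp
      (Polynomial.C xi + Polynomial.C h * Polynomial.X)) with hw
  have hwdeg : w.natDegree ≤ p := by
    refine le_trans (Polynomial.natDegree_C_mul_le _ _) (le_trans Polynomial.natDegree_comp_le ?_)
    have h1 : (Polynomial.C xi + Polynomial.C h * Polynomial.X : Polynomial ℝ).natDegree ≤ 1 := by
      refine le_trans (Polynomial.natDegree_add_le _ _) ?_
      simp [Polynomial.natDegree_C_mul_le, le_trans (Polynomial.natDegree_C_mul_le h Polynomial.X)
        Polynomial.natDegree_X_le]
    have h2 : (v - Polynomial.C (1/2) * (ql + qr)).natDegree ≤ p := by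
      refine le_trans (Polynomial.natDegree_sub_le _ _) (max_le hv ?_)
      exact le_trans (Polynomial.natDegree_C_mul_le _ _)
        (le_trans (Polynomial.natDegree_add_le _ _) (max_le hql hqr))
    calc (v - Polynomial.C (1/2) * (ql + qr)).natDegree *
          (Polynomial.C xi + Polynomial.C h * Polynomial.X : Polynomial ℝ).natDegree
        ≤ p * 1 := Nat.mul_le_mul h2 h1
      _ = p := by ring
  have hweval : ∀ ξ : ℝ, w.eval ξ =
      (v.eval (xi + h*ξ) - (ql.eval (xi + h*ξ) + qr.eval (xi + h*ξ))/2) / h^(p+1) := by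
    intro ξ
    rw [hw]
    simp [Polynomial.eval_comp]
    ring
  -- key identity for fd
  have hfd : ∀ ξ : ℝ, fd p D ξ =
      (qr.eval (xi + h*ξ) - ql.eval (xi + h*ξ)) / (2 * h^(p+1)) := by
    intro ξ
    rw [taylor_sum_eval p qr hqr xi (h*ξ), taylor_sum_eval p ql hql xi (h*ξ),
       ← Finset.sum_sub_distrib, Finset.sum_div, fd, Finset.mul_sum]
    refine Finset.sum_congr rfl fun k _ => ?_
    have hpow : h^(p+1-(k:ℕ)) * h^(k:ℕ) = h^(p+1) := by
      rw [← pow_add]; congr 1; omega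
    have hk : ((Nat.factorial (k:ℕ)) : ℝ) ≠ 0 := by positivity
    have hp1 : h^(p+1-(k:ℕ)) ≠ 0 := by positivity
    rw [hD, ← hpow, mul_pow]
    field_simp
  have hplus : ∀ ξ : ℝ, w.eval ξ + fd p D ξ =
      (v.eval (xi + h*ξ) - ql.eval (xi + h*ξ)) / h^(p+1) := by
    intro ξ; rw [hweval, hfd]; ring
  have hminus : ∀ ξ : ℝ, w.eval ξ - fd p D ξ =
      (v.eval (xi + h*ξ) - qr.eval (xi + h*ξ)) / h^(p+1) := by
    intro ξ; rw [hweval, hfd]; ring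
  -- continuity of the transformed integrands
  have haff : Continuous fun ξ : ℝ => xi + h*ξ := by continuity
  have hcl : Continuous fun ξ : ℝ => ((v.eval (xi + h*ξ) - ql.eval (xi + h*ξ)) / h^(p+1))^2 :=
    (((v.continuous.comp haff).sub (ql.continuous.comp haff)).div_const _).pow 2
  have hcr : Continuous fun ξ : ℝ => ((v.eval (xi + h*ξ) - qr.eval (xi + h*ξ)) / h^(p+1))^2 :=
    (((v.continuous.comp haff).sub (qr.continuous.comp haff)).div_const _).pow 2
  -- bound Qerr
  have hQerr : Qerr p D w ≤ (S / h^(p+1))^2 := by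
    have hl : (∫ ξ in (-(1:ℝ)/2)..0, (w.eval ξ + fd p D ξ)^2) ≤ (S / h^(p+1))^2 * (1/2) := by
      have he : (∫ ξ in (-(1:ℝ)/2)..0, (w.eval ξ + fd p D ξ)^2) =
          ∫ ξ in (-(1:ℝ)/2)..0, ((v.eval (xi + h*ξ) - ql.eval (xi + h*ξ)) / h^(p+1))^2 := by
        apply intervalIntegral.integral_congr
        intro ξ _; show (w.eval ξ + fd p D ξ)^2 = _; rw [hplus ξ]
      rw [he]
      have hmono : (∫ ξ in (-(1:ℝ)/2)..0,
          ((v.eval (xi + h*ξ) - ql.eval (xi + h*ξ)) / h^(p+1))^2) ≤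
          ∫ _ in (-(1:ℝ)/2)..0, (S / h^(p+1))^2 := by
        apply intervalIntegral.integral_mono_on (by norm_num)
          (hcl.intervalIntegrable _ _) intervalIntegrable_const
        intro ξ hξ
        have hx : xi + h*ξ ∈ Set.Icc (xi - h/2) xi := by
          constructor <;> nlinarith [hξ.1, hξ.2]
        have habs : |v.eval (xi + h*ξ) - ql.eval (xi + h*ξ)| ≤ S := hLicc _ hx
        rw [div_pow, div_pow]
        exact (div_le_div_iff_of_pos_right (by positivity)).mpr
          (sq_le_sq' (by linarith [(abs_le.mp habs).1]) (abs_le.mp habs).2)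
      refine le_trans hmono ?_
      rw [intervalIntegral.integral_const, smul_eq_mul]
      norm_num
      linarith
    have hr : (∫ ξ in (0:ℝ)..(1/2), (w.eval ξ - fd p D ξ)^2) ≤ (S / h^(p+1))^2 * (1/2) := by
      have he : (∫ ξ in (0:ℝ)..(1/2), (w.eval ξ - fd p D ξ)^2) =
          ∫ ξ in (0:ℝ)..(1/2), ((v.eval (xi + h*ξ) - qr.eval (xi + h*ξ)) / h^(p+1))^2 := by
        apply intervalIntegral.integral_congr
        intro ξ _; show (w.eval ξ - fd p D ξ)^2 = _; rw [hminus ξ]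
      rw [he]
      have hmono : (∫ ξ in (0:ℝ)..(1/2),
          ((v.eval (xi + h*ξ) - qr.eval (xi + h*ξ)) / h^(p+1))^2) ≤
          ∫ _ in (0:ℝ)..(1/2), (S / h^(p+1))^2 := by
        apply intervalIntegral.integral_mono_on (by norm_num)
          (hcr.intervalIntegrable _ _) intervalIntegrable_const
        intro ξ hξ
        have hx : xi + h*ξ ∈ Set.Icc xi (xi + h/2) := by
          constructor <;> nlinarith [hξ.1, hξ.2]
        have habs : |v.eval (xi + h*ξ) - qr.eval (xi + h*ξ)| ≤ S := hRicc _ hx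
        rw [div_pow, div_pow]
        exact (div_le_div_iff_of_pos_right (by positivity)).mpr
          (sq_le_sq' (by linarith [(abs_le.mp habs).1]) (abs_le.mp habs).2)
      refine le_trans hmono ?_
      rw [intervalIntegral.integral_const, smul_eq_mul]
      norm_num
      linarith
    have : Qerr p D w ≤ (S / h^(p+1))^2 * (1/2) + (S / h^(p+1))^2 * (1/2) :=
      add_le_add hl hr
    linarith
  -- Qform ≤ Qerr
  have hQform : Qform p D ≤ Qerr p D w := by
    apply csInf_le
    · refine ⟨0, ?_⟩
      rintro q ⟨v', _, rfl⟩
      have h1 : (0:ℝ) ≤ ∫ ξ in (-(1:ℝ)/2)..0, (v'.eval ξ + fd p D ξ)^2 :=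
        intervalIntegral.integral_nonneg (by norm_num) (fun x _ => sq_nonneg _)
      have h2 : (0:ℝ) ≤ ∫ ξ in (0:ℝ)..(1/2), (v'.eval ξ - fd p D ξ)^2 :=
        intervalIntegral.integral_nonneg (by norm_num) (fun x _ => sq_nonneg _)
      rw [Qerr]; linarith
    · exact ⟨w, hwdeg, rfl⟩
  have hsqrt : Real.sqrt (Qform p D) ≤ S / h^(p+1) := by
    calc Real.sqrt (Qform p D) ≤ Real.sqrt ((S / h^(p+1))^2) :=
          Real.sqrt_le_sqrt (le_trans hQform hQerr)
      _ = S / h^(p+1) := Real.sqrt_sq (by positivity)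
  calc h^(p+1) * Real.sqrt (Qform p D) ≤ h^(p+1) * (S / h^(p+1)) := by
        gcongr
    _ = S := by field_simp
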